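/- Let M be an n×n real symmetric matrix and let X maximize Y ↦ M·Y (Frobenius inner product) over the elliptope L_n. Then there exists a diagonal matrix D with MX = DX. -/

import Mathlib

def elliptope (n : ℕ) : Set (Matrix (Fin n) (Fin n) ℝ) :=
  {X | X.PosSemidef ∧ ∀ i, X i i = 1}

def frob {n : ℕ} (A B : Matrix (Fin n) (Fin n) ℝ) : ℝ :=
  ∑ i, ∑ j, A i j * B i j

open Matrix in
theorem stmt7 {n : ℕ} (M X : Matrix (Fin n) (Fin n) ℝ) (hM : M.IsSymm)
    (hX : X ∈ elliptope n) (hmax : ∀ Y ∈ elliptope n, frob M Y ≤ frob M X) :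
    ∃ D : Matrix (Fin n) (Fin n) ℝ, D.IsDiag ∧ M * X = D * X := by
  classical
  obtain ⟨hpsd, hdiag⟩ := hX
  obtain ⟨B, hB⟩ : ∃ B : Matrix (Fin n) (Fin n) ℝ, X = Bᴴ * B := by
    open scoped MatrixOrder in exact CStarAlgebra.nonneg_iff_eq_star_mul_self.mp hpsd.nonneg
  have hMsymm : ∀ i j, M j i = M i j := fun i j => by
    conv_lhs => rw [← hM]
    rfl
  have hBX : ∀ i j, X i j = ∑ k, B k i * B k j := by
    intro i j
    rw [hB, Matrix.mul_apply]
    simp [Matrix.conjTranspose_apply]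
  -- Key claim
  have key : ∀ i j, (M * X) i j = (M * X) i i * X i j := by
    intro i₀ j₀
    set er : Finset (Fin n) := Finset.univ.erase i₀ with her
    set v : Fin n → ℝ := fun k => B k i₀ with hv
    set w : Fin n → ℝ := fun k => ∑ j ∈ er, M i₀ j * B k j with hw
    have hvnorm : ∑ k, v k * v k = 1 := by
      have := hdiag i₀
      rw [hBX i₀ i₀] at this
      exact this
    -- membership of perturbed Gram matrices
    have hmem : ∀ u : Fin n → ℝ, (∑ k, u k * u k) = 1 →
        (B.updateCol i₀ u)ᴴ * (B.updateCol i₀ u) ∈ elliptope n := by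
      intro u hu
      refine ⟨Matrix.posSemidef_conjTranspose_mul_self _, fun i => ?_⟩
      rw [Matrix.mul_apply]
      by_cases hi : i = i₀
      · subst hi
        simpa [Matrix.conjTranspose_apply, Matrix.updateCol_apply] using hu
      · have : ∀ k, B.updateCol i₀ u k i = B k i := fun k => by
          simp [Matrix.updateCol_apply, hi]
        simp only [Matrix.conjTranspose_apply, this, star_trivial]
        rw [← hBX i i]
        exact hdiag i
    -- expansion of the objective
    have expand : ∀ u : Fin n → ℝ,
        frob M ((B.updateCol i₀ u)ᴴ * (B.updateCol i₀ u)) =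
          (∑ i ∈ er, ∑ j ∈ er, M i j * X i j) + 2 * (∑ k, u k * w k)
            + M i₀ i₀ * (∑ k, u k * u k) := by
      intro u
      have hA : ∀ k j, B.updateCol i₀ u k j = if j = i₀ then u k else B k j := by
        intro k j; simp [Matrix.updateCol_apply]
      have hS : ∀ i j, ((B.updateCol i₀ u)ᴴ * (B.updateCol i₀ u)) i j
          = ∑ k, (if i = i₀ then u k else B k i) * (if j = i₀ then u k else B k j) := by
        intro i j
        rw [Matrix.mul_apply]
        simp [Matrix.conjTranspose_apply, hA]
      rw [frob]
      rw [← Finset.sum_erase_add _ _ (Finset.mem_univ i₀)]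
      rw [← Finset.sum_erase_add _ (fun j => M i₀ j * _) (Finset.mem_univ i₀)]
      have h1 : ∀ i ∈ er, ∑ j, M i j * ((B.updateCol i₀ u)ᴴ * (B.updateCol i₀ u)) i j
          = (∑ j ∈ er, M i j * X i j) + M i i₀ * (∑ k, B k i * u k) := by
        intro i hi
        have hi' : i ≠ i₀ := Finset.ne_of_mem_erase hi
        rw [← Finset.sum_erase_add _ _ (Finset.mem_univ i₀)]
        congr 1
        · refine Finset.sum_congr rfl fun j hj => ?_
          have hj' : j ≠ i₀ := Finset.ne_of_mem_erase hj
          rw [hS, hBX]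
          simp [hi', hj']
        · rw [hS]
          simp [hi']
      rw [Finset.sum_congr rfl h1]
      have h2 : ∀ j ∈ er, M i₀ j * ((B.updateCol i₀ u)ᴴ * (B.updateCol i₀ u)) i₀ j
          = M i₀ j * (∑ k, u k * B k j) := by
        intro j hj
        have hj' : j ≠ i₀ := Finset.ne_of_mem_erase hj
        rw [hS]
        simp [hj']
      rw [Finset.sum_congr rfl h2]
      have h3 : ((B.updateCol i₀ u)ᴴ * (B.updateCol i₀ u)) i₀ i₀ = ∑ k, u k * u k := by
        rw [hS]; simp
      rw [h3]
      have h4 : ∑ i ∈ er, M i i₀ * (∑ k, B k i * u k) = ∑ k, u k * w k := by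
        simp_rw [hw, Finset.mul_sum]
        rw [Finset.sum_comm]
        exact Finset.sum_congr rfl fun k _ => Finset.sum_congr rfl fun i _ => by
          rw [hMsymm i₀ i]; ring
      have h5 : ∑ j ∈ er, M i₀ j * (∑ k, u k * B k j) = ∑ k, u k * w k := by
        simp_rw [hw, Finset.mul_sum]
        rw [Finset.sum_comm]
        exact Finset.sum_congr rfl fun k _ => Finset.sum_congr rfl fun i _ => by ring
      rw [Finset.sum_add_distrib, h4, h5]
      ring
    -- frob M X is the value at u = v
    have hXval : frob M X = (∑ i ∈ er, ∑ j ∈ er, M i j * X i j) + 2 * (∑ k, v k * w k)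
        + M i₀ i₀ * 1 := by
      have := expand v
      rw [hv] at this
      rw [Matrix.updateCol_eq_self] at this
      rw [← hB] at this
      rw [this, ← hv, hvnorm]
    -- optimality inequality
    have hineq : ∀ u : Fin n → ℝ, (∑ k, u k * u k) = 1 →
        (∑ k, u k * w k) ≤ ∑ k, v k * w k := by
      intro u hu
      have h := hmax _ (hmem u hu)
      rw [expand u, hu, hXval] at h
      linarith
    -- conclude w is a multiple of v
    set μ : ℝ := ∑ k, v k * w k with hμ
    have hwv : ∀ k, w k = μ * v k := by
      have hN : Real.sqrt (∑ k, w k * w k) ≤ μ := by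
        by_cases h0 : ∑ k, w k * w k = 0
        · rw [h0, Real.sqrt_zero]
          have : ∀ k, w k = 0 := by
            intro k
            have hk := Finset.sum_eq_zero_iff_of_nonneg
              (fun k _ => mul_self_nonneg (w k)) |>.mp h0 k (Finset.mem_univ k)
            nlinarith [hk]
          simp [hμ, this]
        · have hpos : 0 < ∑ k, w k * w k := by
            rcases lt_or_eq_of_le (Finset.sum_nonneg fun k _ => mul_self_nonneg (w k)) with h | h
            · exact h
            · exact absurd h.symm h0
          set N := Real.sqrt (∑ k, w k * w k) with hNdef
          have hNpos : 0 < N := Real.sqrt_pos.mpr hpos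
          have hN2 : N * N = ∑ k, w k * w k := Real.mul_self_sqrt hpos.le
          have hu1 : ∑ k, (N⁻¹ * w k) * (N⁻¹ * w k) = 1 := by
            have e : ∀ k, (N⁻¹ * w k) * (N⁻¹ * w k) = (N⁻¹ * N⁻¹) * (w k * w k) :=
              fun k => by ring
            rw [Finset.sum_congr rfl fun k _ => e k, ← Finset.mul_sum, ← hN2]
            field_simp
          have := hineq (fun k => N⁻¹ * w k) hu1
          calc N = N⁻¹ * (N * N) := by field_simp
            _ = N⁻¹ * ∑ k, w k * w k := by rw [hN2]
            _ = ∑ k, (N⁻¹ * w k) * w k := by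
                  rw [Finset.mul_sum]
                  exact Finset.sum_congr rfl fun k _ => by ring
            _ ≤ μ := this
      have hsq : ∑ k, (w k - μ * v k) * (w k - μ * v k)
          = (∑ k, w k * w k) - μ * μ := by
        have : ∀ k, (w k - μ * v k) * (w k - μ * v k)
            = w k * w k - 2 * μ * (v k * w k) + μ * μ * (v k * v k) := fun k => by ring
        rw [Finset.sum_congr rfl fun k _ => this k]
        rw [Finset.sum_add_distrib, Finset.sum_sub_distrib, ← Finset.mul_sum,
          ← Finset.mul_sum, ← hμ, hvnorm]
        ring
      have hNμ : (∑ k, w k * w k) ≤ μ * μ := by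
        have h1 : 0 ≤ μ := le_trans (Real.sqrt_nonneg _) hN
        have hs := Real.mul_self_sqrt (Finset.sum_nonneg
          fun k (_ : k ∈ Finset.univ) => mul_self_nonneg (w k))
        nlinarith [Real.sqrt_nonneg (∑ k, w k * w k), hN, hs]
      have hzero : ∑ k, (w k - μ * v k) * (w k - μ * v k) = 0 := by
        have hnn : 0 ≤ ∑ k, (w k - μ * v k) * (w k - μ * v k) :=
          Finset.sum_nonneg fun k _ => mul_self_nonneg _
        rw [hsq] at hnn ⊢
        linarith
      intro k
      have := Finset.sum_eq_zero_iff_of_nonneg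
        (fun k _ => mul_self_nonneg (w k - μ * v k)) |>.mp hzero k (Finset.mem_univ k)
      nlinarith [this]
    -- full eigen-equation: ∑ m, M i₀ m * B k m = (μ + M i₀ i₀) * v k
    have heig : ∀ k, (∑ m, M i₀ m * B k m) = (μ + M i₀ i₀) * v k := by
      intro k
      rw [← Finset.sum_erase_add _ _ (Finset.mem_univ i₀)]
      have e1 : ∑ x ∈ Finset.univ.erase i₀, M i₀ x * B k x = w k := rfl
      have e2 : B k i₀ = v k := rfl
      rw [e1, hwv k, e2]
      ring
    -- compute (M*X) i₀ j for any j
    have hMX : ∀ j, (M * X) i₀ j = (μ + M i₀ i₀) * X i₀ j := by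
      intro j
      rw [Matrix.mul_apply]
      have : ∀ m, M i₀ m * X m j = ∑ k, (M i₀ m * B k m) * B k j := by
        intro m; rw [hBX m j, Finset.mul_sum]; ring_nf
      rw [Finset.sum_congr rfl fun m _ => this m, Finset.sum_comm]
      have : ∀ k, (∑ m, (M i₀ m * B k m) * B k j) = ((μ + M i₀ i₀) * v k) * B k j := by
        intro k
        rw [← Finset.sum_mul, heig k]
      rw [Finset.sum_congr rfl fun k _ => this k]
      rw [hBX i₀ j, Finset.mul_sum]
      refine Finset.sum_congr rfl fun k _ => ?_
      rw [hv]; ring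
    have hdiagval : (M * X) i₀ i₀ = μ + M i₀ i₀ := by
      rw [hMX i₀, hdiag i₀, mul_one]
    rw [hMX j₀, hdiagval]
  refine ⟨Matrix.diagonal (fun i => (M * X) i i), Matrix.isDiag_diagonal _, ?_⟩
  ext i j
  rw [Matrix.diagonal_mul]
  exact key i j
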